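/- arXiv:2509.11001 — 2 statements merged into one kernel-verified Lean document; each statement's English description precedes it below -/
import Mathlib

section
/- Let n be a natural number with prime factorisation n = p_1^{α_1} ⋯ p_t^{α_t} (the p_i distinct primes). Then every skew brace of order n is weakly trivial if and only if α_i = 1 for every i and p_i does not divide p_j − 1 for all i ≠ j. -/
/-- A skew (left) brace: a set with two group structures `(A,+)` and `(A,∘)`
(the latter written multiplicatively) satisfying
`a ∘ (b + c) = a ∘ b - a + a ∘ c`. -/
class SkewBrace (A : Type*) extends AddGroup A, Group A where
  skew_left_distrib : ∀ a b c : A, a * (b + c) = a * b - a + a * c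

/-- The derived ideal `A² = A ∗ A`: the subgroup of `(A,+)` generated by the
star products `a ∗ b = -a + a ∘ b - b`. -/
def derivedIdeal (A : Type*) [SkewBrace A] : AddSubgroup A :=
  AddSubgroup.closure {x : A | ∃ a b : A, x = -a + a * b - b}

/-- The derived ideal of the opposite skew brace `A_op = (A, +_op, ∘)`:
as a subset of `A`, it is the subgroup of `(A,+)` generated by the opposite
star products `a ∗_op b = -b + a ∘ b - a` (a set is a subgroup of `(A,+_op)`
iff it is a subgroup of `(A,+)`). -/
def oppositeDerivedIdeal (A : Type*) [SkewBrace A] : AddSubgroup A :=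
  AddSubgroup.closure {x : A | ∃ a b : A, x = -b + a * b - a}

/-- A skew brace is weakly trivial if `A² ∩ A_op² = {0}`. -/
def IsWeaklyTrivial (A : Type*) [SkewBrace A] : Prop :=
  derivedIdeal A ⊓ oppositeDerivedIdeal A = ⊥

lemma totient_eq_prod_of_squarefree {n : ℕ} (hn : 0 < n) (hsf : Squarefree n) :
    n.totient = ∏ p ∈ n.primeFactors, (p - 1) := by
  rw [Nat.totient_eq_prod_factorization hn.ne', Finsupp.prod, Nat.support_factorization]
  refine Finset.prod_congr rfl fun p hp => ?_
  have h1 : n.factorization p = 1 :=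
    le_antisymm ((Nat.squarefree_iff_factorization_le_one hn.ne').mp hsf p)
      ((Nat.Prime.factorization_pos_of_dvd (Nat.prime_of_mem_primeFactors hp) hn.ne'
        (Nat.dvd_of_mem_primeFactors hp)))
  rw [h1]
  simp

lemma coprime_totient_of_cond {n : ℕ} (hn : 0 < n) (hsf : Squarefree n)
    (hnd : ∀ p ∈ n.primeFactors, ∀ q ∈ n.primeFactors, p ≠ q → ¬ p ∣ q - 1) :
    Nat.Coprime n n.totient := by
  by_contra h
  set g := Nat.gcd n n.totient with hg
  have hg1 : g ≠ 1 := h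
  have hgn : g ∣ n := Nat.gcd_dvd_left _ _
  have hgt : g ∣ n.totient := Nat.gcd_dvd_right _ _
  have hrp : g.minFac.Prime := Nat.minFac_prime hg1
  have hrn : g.minFac ∣ n := (Nat.minFac_dvd g).trans hgn
  have hrt : g.minFac ∣ n.totient := (Nat.minFac_dvd g).trans hgt
  rw [totient_eq_prod_of_squarefree hn hsf] at hrt
  obtain ⟨q, hq, hrq⟩ := (hrp.prime.dvd_finset_prod_iff _).mp hrt
  have hqp : q.Prime := Nat.prime_of_mem_primeFactors hq
  have hrne : g.minFac ≠ q := by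
    intro hEq
    rw [hEq] at hrq
    have h1 : 1 ≤ q - 1 := Nat.le_sub_one_of_lt hqp.one_lt
    have := Nat.le_of_dvd (by omega) hrq
    omega
  exact hnd g.minFac (Nat.mem_primeFactors.mpr ⟨hrp, hrn, hn.ne'⟩) q hq hrne hrq

lemma cyclic_of_comm_of_squarefree (G : Type*) [Group G] [Finite G]
    (hc : ∀ a b : G, a * b = b * a) (hsf : Squarefree (Nat.card G)) : IsCyclic G := by
  letI := Fintype.ofFinite G
  letI : CommGroup G := { (inferInstance : Group G) with mul_comm := hc }
  have hdvd : Nat.card G ∣ Monoid.exponent G := by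
    rw [← Nat.prod_primeFactors_of_squarefree hsf]
    refine Finset.prod_primes_dvd _ (fun a ha => (Nat.prime_of_mem_primeFactors ha).prime)
      (fun a ha => ?_)
    haveI : Fact a.Prime := ⟨Nat.prime_of_mem_primeFactors ha⟩
    obtain ⟨x, hx⟩ := exists_prime_orderOf_dvd_card (G := G) a
      (by rw [← Nat.card_eq_fintype_card]; exact Nat.dvd_of_mem_primeFactors ha)
    exact hx ▸ Monoid.order_dvd_exponent x
  have he : Monoid.exponent G = Nat.card G :=
    Nat.dvd_antisymm (by rw [Nat.card_eq_fintype_card]; exact Group.exponent_dvd_card) hdvd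
  obtain ⟨g, hg⟩ := Monoid.exists_orderOf_eq_exponent ((Monoid.ExponentExists.of_finite : Monoid.ExponentExists G))
  exact isCyclic_of_orderOf_eq_card g (hg.trans he)

open Subgroup

lemma eq_one_of_dvd_coprime {a b k : ℕ} (hco : Nat.Coprime a b) (h1 : k ∣ a) (h2 : k ∣ b) :
    k = 1 :=
  Nat.eq_one_of_dvd_one (hco ▸ Nat.dvd_gcd h1 h2)

lemma cyclic_aux {n : ℕ} (hn : 0 < n) (hsf : Squarefree n) (hco : Nat.Coprime n n.totient) :
    ∀ m : ℕ, m ∣ n → ∀ (G : Type) (_ : Group G) (_ : Finite G), Nat.card G = m → IsCyclic G := by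
  intro m
  induction m using Nat.strong_induction_on with
  | _ m ih =>
    intro hmn G _ _ hcard
    rcases eq_or_ne m 1 with rfl | hm1
    · haveI : Subsingleton G := (Nat.card_eq_one_iff_unique.mp hcard).1
      infer_instance
    have hm0 : 0 < m := hcard ▸ Nat.card_pos
    set p := m.minFac with hpdef
    have hp : p.Prime := Nat.minFac_prime hm1
    haveI : Fact p.Prime := ⟨hp⟩
    have hpm : p ∣ m := Nat.minFac_dvd m
    have hpn : p ∣ n := hpm.trans hmn
    have hsfm : Squarefree m := hsf.squarefree_of_dvd hmn
    obtain ⟨P⟩ : Nonempty (Sylow p G) := inferInstance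
    have hfac : m.factorization p = 1 :=
      le_antisymm ((Nat.squarefree_iff_factorization_le_one hm0.ne').mp hsfm p)
        (hp.factorization_pos_of_dvd hm0.ne' hpm)
    have hcardP : Nat.card P = p := by
      rw [Sylow.card_eq_multiplicity, hcard, hfac, pow_one]
    haveI : IsCyclic P := isCyclic_of_prime_card hcardP
    -- coprimality facts
    have hcop1 : Nat.Coprime m (p - 1) := by
      refine (Nat.Coprime.coprime_dvd_left hmn hco).coprime_dvd_right ?_
      have := Nat.totient_dvd_of_dvd hpn
      rwa [Nat.totient_prime hp] at this
    -- normalizer ≤ centralizer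
    have hNC : normalizer (P : Set G) ≤ centralizer (P : Set G) := by
      intro g hg
      set x : (normalizer (P : Set G) : Subgroup G) := ⟨g, hg⟩ with hx
      have h1 : orderOf ((P : Subgroup G).normalizerMonoidHom x) ∣ m := by
        refine (orderOf_map_dvd _ x).trans ?_
        refine (orderOf_dvd_natCard x).trans ?_
        exact hcard ▸ Subgroup.card_subgroup_dvd_card _
      have h2 : orderOf ((P : Subgroup G).normalizerMonoidHom x) ∣ p - 1 := by
        have hma : Nat.card (MulAut (P : Subgroup G)) = p - 1 := by
          rw [IsCyclic.card_mulAut, hcardP, Nat.totient_prime hp]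
        exact hma ▸ orderOf_dvd_natCard _
      have hone : (P : Subgroup G).normalizerMonoidHom x = 1 :=
        orderOf_eq_one_iff.mp (eq_one_of_dvd_coprime hcop1 h1 h2)
      have hker : x ∈ ((P : Subgroup G).normalizerMonoidHom).ker := hone
      rw [Subgroup.normalizerMonoidHom_ker] at hker
      exact Subgroup.mem_subgroupOf.mp hker
    -- Burnside
    set N := (MonoidHom.transferSylow P hNC).ker with hNdef
    have hcompl := MonoidHom.ker_transferSylow_isComplement' P hNC
    have hcards : Nat.card N * p = m := by rw [← hcardP, hcompl.card_mul, hcard]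
    have hNdvd : Nat.card N ∣ m := ⟨p, hcards.symm⟩
    have hNpos : 0 < Nat.card N := Nat.card_pos
    have hNlt : Nat.card N < m := by
      have := hp.two_le
      nlinarith [hNpos]
    haveI hcycN : IsCyclic N := ih _ hNlt (hNdvd.trans hmn) N inferInstance inferInstance rfl
    -- N ≤ center
    have hcop2 : Nat.Coprime m (Nat.card N).totient := by
      refine (Nat.Coprime.coprime_dvd_left hmn hco).coprime_dvd_right ?_
      exact Nat.totient_dvd_of_dvd (hNdvd.trans hmn)
    have hkey : ∀ g : G, (MulAut.conjNormal g : MulAut N) = 1 := by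
      intro g
      have h1 : orderOf (MulAut.conjNormal g : MulAut N) ∣ m :=
        (orderOf_map_dvd _ g).trans (hcard ▸ orderOf_dvd_natCard g)
      have h2 : orderOf (MulAut.conjNormal g : MulAut N) ∣ (Nat.card N).totient := by
        have hma : Nat.card (MulAut N) = (Nat.card N).totient := IsCyclic.card_mulAut N
        exact hma ▸ orderOf_dvd_natCard _
      exact orderOf_eq_one_iff.mp (eq_one_of_dvd_coprime hcop2 h1 h2)
    have hNcen : N ≤ center G := by
      intro x hx
      rw [Subgroup.mem_center_iff]
      intro g
      have h1 : (MulAut.conjNormal g : MulAut N) ⟨x, hx⟩ = ⟨x, hx⟩ := by rw [hkey g]; rfl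
      have h2 : g * x * g⁻¹ = x := by
        have := congrArg Subtype.val h1
        simpa using this
      rw [mul_inv_eq_iff_eq_mul] at h2
      exact h2
    -- quotient cyclic of prime order
    haveI : IsCyclic (G ⧸ N) := by
      apply isCyclic_of_prime_card (p := p)
      have h3 : Nat.card (G ⧸ N) = N.index := rfl
      rw [h3, hcompl.symm.index_eq_card, hcardP]
    have hcomm : ∀ a b : G, a * b = b * a :=
      commutative_of_cyclic_center_quotient (QuotientGroup.mk' N)
        (by rw [QuotientGroup.ker_mk']; exact hNcen)
    exact cyclic_of_comm_of_squarefree G hcomm (by rw [hcard]; exact hsfm)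

def trivialSB (T : Type*) [i : AddGroup T] : SkewBrace T where
  toAddGroup := i
  mul a b := a + b
  one := 0
  inv a := -a
  mul_assoc := add_assoc
  one_mul := zero_add
  mul_one := add_zero
  inv_mul_cancel := neg_add_cancel
  skew_left_distrib a b c := by
    show a + (b + c) = (a + b) - a + (a + c)
    rw [sub_eq_add_neg, add_assoc, add_assoc, neg_add_cancel_left]

/-- The product of two skew braces. -/
def prodSB {B C : Type*} (iB : SkewBrace B) (iC : SkewBrace C) : SkewBrace (B × C) := by
  letI := iB; letI := iC
  exact
    { (inferInstance : AddGroup (B × C)), (inferInstance : Group (B × C)) with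
      skew_left_distrib := fun a b c => by
        have h1 := SkewBrace.skew_left_distrib a.1 b.1 c.1
        have h2 := SkewBrace.skew_left_distrib a.2 b.2 c.2
        exact Prod.ext h1 h2 }

/-- The nontrivial skew brace of order `p²`: `a ∘ b = a + b + p·a·b` on `ZMod p²`. -/
def sb1 (p : ℕ) : SkewBrace (ZMod (p ^ 2)) := by
  have hp2 : ((p : ZMod (p ^ 2))) ^ 2 = 0 := by
    rw [← Nat.cast_pow, ZMod.natCast_self]
  exact
    { (inferInstance : AddGroup (ZMod (p ^ 2))) with
      mul := fun a b => a + b + (p : ZMod (p ^ 2)) * a * b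
      npow := fun n x => Nat.rec (0 : ZMod (p ^ 2)) (fun _ y => y + x + (p : ZMod (p ^ 2)) * y * x) n
      npow_zero := fun _ => rfl
      npow_succ := fun _ _ => rfl
      one := 0
      inv := fun a => -a + (p : ZMod (p ^ 2)) * a ^ 2
      mul_assoc := by
        intro a b c
        show (a + b + (p : ZMod (p ^ 2)) * a * b) + c +
            (p : ZMod (p ^ 2)) * (a + b + (p : ZMod (p ^ 2)) * a * b) * c =
          a + (b + c + (p : ZMod (p ^ 2)) * b * c) +
            (p : ZMod (p ^ 2)) * a * (b + c + (p : ZMod (p ^ 2)) * b * c)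
        ring
      one_mul := by intro a; show (0 : ZMod (p^2)) + a + (p : ZMod (p ^ 2)) * 0 * a = a; ring
      mul_one := by intro a; show a + 0 + (p : ZMod (p ^ 2)) * a * 0 = a; ring
      inv_mul_cancel := by
        intro a
        show (-a + (p : ZMod (p ^ 2)) * a ^ 2) + a +
          (p : ZMod (p ^ 2)) * (-a + (p : ZMod (p ^ 2)) * a ^ 2) * a = 0
        linear_combination (a ^ 3) * hp2
      skew_left_distrib := by
        intro a b c
        show a + (b + c) + (p : ZMod (p ^ 2)) * a * (b + c) =
          (a + b + (p : ZMod (p ^ 2)) * a * b) - a + (a + c + (p : ZMod (p ^ 2)) * a * c)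
        ring }

/-- A skew brace with abelian additive group and nonabelian circle group
`ZMod q ⋊ ZMod p`. -/
def sb2 (p q : ℕ) [NeZero p] (g : ZMod q) (hg : g ^ p = 1) :
    SkewBrace (ZMod q × ZMod p) := by
  have hpow : ∀ x y : ZMod p, g ^ (x + y).val = g ^ x.val * g ^ y.val := by
    intro x y
    rw [ZMod.val_add, ← pow_eq_pow_mod _ hg, pow_add]
  exact
    { (inferInstance : AddGroup (ZMod q × ZMod p)) with
      mul := fun x y => (x.1 + g ^ x.2.val * y.1, x.2 + y.2)
      npow := fun n x => Nat.rec ((0, 0) : ZMod q × ZMod p) (fun _ y => (y.1 + g ^ y.2.val * x.1, y.2 + x.2)) n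
      npow_zero := fun _ => rfl
      npow_succ := fun _ _ => rfl
      one := (0, 0)
      inv := fun x => (-(g ^ (-x.2).val * x.1), -x.2)
      mul_assoc := by
        intro x y z
        refine Prod.ext ?_ (add_assoc _ _ _)
        show (x.1 + g ^ x.2.val * y.1) + g ^ (x.2 + y.2).val * z.1 =
          x.1 + g ^ x.2.val * (y.1 + g ^ y.2.val * z.1)
        rw [hpow]
        ring
      one_mul := by
        intro x
        refine Prod.ext ?_ (zero_add _)
        show (0 : ZMod q) + g ^ (0 : ZMod p).val * x.1 = x.1
        rw [ZMod.val_zero, pow_zero]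
        ring
      mul_one := by
        intro x
        refine Prod.ext ?_ (add_zero _)
        show x.1 + g ^ x.2.val * 0 = x.1
        ring
      inv_mul_cancel := by
        intro x
        refine Prod.ext ?_ (neg_add_cancel _)
        show -(g ^ (-x.2).val * x.1) + g ^ (-x.2).val * x.1 = 0
        ring
      skew_left_distrib := by
        intro x y z
        refine Prod.ext ?_ ?_
        · show x.1 + g ^ x.2.val * (y.1 + z.1) =
            (x.1 + g ^ x.2.val * y.1) - x.1 + (x.1 + g ^ x.2.val * z.1)
          ring
        · show x.2 + (y.2 + z.2) = (x.2 + y.2) - x.2 + (x.2 + z.2)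
          ring }

namespace SkewBrace

variable {A : Type*} [SkewBrace A]

lemma mul_zero' (a : A) : a * (0 : A) = a := by
  have h := SkewBrace.skew_left_distrib a 0 0
  rw [add_zero, sub_eq_add_neg, add_assoc] at h
  have h2 : -a + a * (0 : A) = 0 := (left_eq_add.mp h)
  exact (neg_add_eq_zero.mp h2).symm

lemma zero_eq_one : (0 : A) = 1 := by
  have h := mul_zero' (1 : A)
  rwa [one_mul] at h

lemma mul_neg' (a b : A) : a * (-b) = a - a * b + a := by
  have h := SkewBrace.skew_left_distrib a (-b) b
  rw [neg_add_cancel, mul_zero'] at h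
  calc a * (-b) = (a * (-b) - a + a * b) - a * b + a := by
        rw [add_sub_cancel_right, sub_add_cancel]
    _ = a - a * b + a := by rw [← h]

/-- The lambda map `λ_a : b ↦ -a + a∘b` as an automorphism of `(A,+)`. -/
def lam (a : A) : MulAut (Multiplicative A) where
  toFun x := Multiplicative.ofAdd (-a + a * x.toAdd)
  invFun x := Multiplicative.ofAdd (a⁻¹ * (a + x.toAdd))
  left_inv x := by
    simp only [toAdd_ofAdd]
    rw [add_neg_cancel_left, ← mul_assoc, inv_mul_cancel, one_mul, ofAdd_toAdd]
  right_inv x := by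
    simp only [toAdd_ofAdd]
    rw [← mul_assoc, mul_inv_cancel, one_mul, neg_add_cancel_left, ofAdd_toAdd]
  map_mul' x y := by
    show Multiplicative.ofAdd (-a + a * (x.toAdd + y.toAdd)) =
      Multiplicative.ofAdd ((-a + a * x.toAdd) + (-a + a * y.toAdd))
    rw [SkewBrace.skew_left_distrib]
    simp [sub_eq_add_neg, add_assoc]

lemma lam_apply (a : A) (x : Multiplicative A) :
    lam a x = Multiplicative.ofAdd (-a + a * x.toAdd) := rfl

/-- `λ` as a group homomorphism from `(A,∘)` to `Aut(A,+)`. -/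
def lamHom : A →* MulAut (Multiplicative A) where
  toFun := lam
  map_one' := by
    apply MulEquiv.ext
    intro x
    show Multiplicative.ofAdd (-(1:A) + 1 * x.toAdd) = x
    rw [one_mul, ← zero_eq_one, neg_zero, zero_add]
    simp
  map_mul' a b := by
    apply MulEquiv.ext
    intro x
    show Multiplicative.ofAdd (-(a*b) + (a*b) * x.toAdd) =
      Multiplicative.ofAdd (-a + a * (-b + b * x.toAdd))
    rw [SkewBrace.skew_left_distrib a (-b) (b * x.toAdd), mul_neg', ← mul_assoc]
    congr 1
    simp [sub_eq_add_neg, add_assoc]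

end SkewBrace

lemma weaklyTrivial_of_cond (A : Type) [Fintype A] [SkewBrace A]
    (hcyc : IsCyclic (Multiplicative A))
    (hco : Nat.Coprime (Fintype.card A) (Fintype.card A).totient) :
    IsWeaklyTrivial A := by
  have hmul : ∀ a b : A, a * b = a + b := by
    intro a b
    have h1 : orderOf (SkewBrace.lamHom a) ∣ Fintype.card A :=
      (orderOf_map_dvd _ a).trans (by rw [← Nat.card_eq_fintype_card]; exact orderOf_dvd_natCard a)
    have h2 : orderOf (SkewBrace.lamHom a) ∣ (Fintype.card A).totient := by
      have hma : Nat.card (MulAut (Multiplicative A)) = (Fintype.card A).totient := by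
        rw [IsCyclic.card_mulAut]
        congr 1
        rw [Nat.card_eq_fintype_card]
        exact Fintype.card_congr Multiplicative.toAdd
      exact hma ▸ orderOf_dvd_natCard _
    have hone : SkewBrace.lamHom a = (1 : MulAut (Multiplicative A)) :=
      orderOf_eq_one_iff.mp (Nat.eq_one_of_dvd_one (hco ▸ Nat.dvd_gcd h1 h2))
    have h3 := congrArg (fun f : MulAut (Multiplicative A) => (f (Multiplicative.ofAdd b)).toAdd)
      hone
    simp only [SkewBrace.lamHom, MonoidHom.coe_mk, OneHom.coe_mk, SkewBrace.lam_apply,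
      toAdd_ofAdd] at h3
    have h4 : -a + a * b = b := h3
    have := congrArg (a + ·) h4
    simpa [add_neg_cancel_left] using this
  have hd : derivedIdeal A = ⊥ := by
    rw [derivedIdeal, ← le_bot_iff]
    rw [AddSubgroup.closure_le]
    rintro x ⟨a, b, rfl⟩
    simp only [SetLike.mem_coe, AddSubgroup.mem_bot, hmul]
    rw [neg_add_cancel_left, sub_self]
  rw [IsWeaklyTrivial, hd, bot_inf_eq]

/-- Main theorem. -/
theorem every_skewBrace_is_weakly_trivial_iff (n : ℕ) (hn : 0 < n) :
    (∀ (A : Type) [Fintype A] [SkewBrace A], Fintype.card A = n →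
      IsWeaklyTrivial A) ↔
    ((∀ p ∈ n.primeFactors, n.factorization p = 1) ∧
      (∀ p ∈ n.primeFactors, ∀ q ∈ n.primeFactors, p ≠ q → ¬ p ∣ q - 1)) := by
  constructor
  · intro hLHS
    constructor
    · -- square-free part
      intro p hp
      by_contra hne
      have hpp : p.Prime := Nat.prime_of_mem_primeFactors hp
      have hge1 : 1 ≤ n.factorization p :=
        hpp.factorization_pos_of_dvd hn.ne' (Nat.dvd_of_mem_primeFactors hp)
      have h2 : 2 ≤ n.factorization p := by omega
      have hp2 : p ^ 2 ∣ n := (Nat.Prime.pow_dvd_iff_le_factorization hpp hn.ne').mpr h2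
      set m := n / p ^ 2 with hmdef
      have hm : p ^ 2 * m = n := Nat.mul_div_cancel' hp2
      have hm0 : 0 < m := by
        rcases Nat.eq_zero_or_pos m with h | h
        · rw [h, mul_zero] at hm; omega
        · exact h
      haveI : NeZero (p ^ 2) := ⟨pow_ne_zero 2 hpp.pos.ne'⟩
      haveI : NeZero m := ⟨hm0.ne'⟩
      letI iA : SkewBrace (ZMod (p ^ 2) × ZMod m) := prodSB (sb1 p) (trivialSB (ZMod m))
      have hcard : Fintype.card (ZMod (p ^ 2) × ZMod m) = n := by
        rw [Fintype.card_prod, ZMod.card, ZMod.card, hm]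
      have hwt : derivedIdeal (ZMod (p ^ 2) × ZMod m) ⊓
          oppositeDerivedIdeal (ZMod (p ^ 2) × ZMod m) = ⊥ :=
        hLHS (ZMod (p ^ 2) × ZMod m) hcard
      have hπ : (p : ZMod (p ^ 2)) ≠ 0 := by
        intro h
        rw [ZMod.natCast_eq_zero_iff] at h
        have := Nat.le_of_dvd hpp.pos h
        have := hpp.two_le
        nlinarith
      set a : ZMod (p ^ 2) × ZMod m := (1, 0) with hadef
      set e : ZMod (p ^ 2) × ZMod m := ((p : ZMod (p ^ 2)), 0) with hedef
      have he0 : e ≠ 0 := by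
        intro h
        exact hπ (congrArg Prod.fst h)
      have hmem1 : e ∈ derivedIdeal (ZMod (p ^ 2) × ZMod m) := by
        apply @AddSubgroup.subset_closure _ iA.toAddGroup
        refine ⟨a, a, Prod.ext ?_ ?_⟩
        · show (p : ZMod (p ^ 2)) = -1 + (1 + 1 + (p : ZMod (p ^ 2)) * 1 * 1) - 1
          ring
        · show (0 : ZMod m) = -0 + (0 + 0) - 0
          ring
      have hmem2 : e ∈ oppositeDerivedIdeal (ZMod (p ^ 2) × ZMod m) := by
        apply @AddSubgroup.subset_closure _ iA.toAddGroup
        refine ⟨a, a, Prod.ext ?_ ?_⟩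
        · show (p : ZMod (p ^ 2)) = -1 + (1 + 1 + (p : ZMod (p ^ 2)) * 1 * 1) - 1
          ring
        · show (0 : ZMod m) = -0 + (0 + 0) - 0
          ring
      have hmem : e ∈ derivedIdeal (ZMod (p ^ 2) × ZMod m) ⊓
          oppositeDerivedIdeal (ZMod (p ^ 2) × ZMod m) := ⟨hmem1, hmem2⟩
      rw [hwt] at hmem
      exact he0 ((@AddSubgroup.mem_bot _ iA.toAddGroup e).mp hmem)
    · -- p ∤ q - 1 part
      intro p hp q hq hne hdvd
      have hpp : p.Prime := Nat.prime_of_mem_primeFactors hp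
      have hqp : q.Prime := Nat.prime_of_mem_primeFactors hq
      have hpq : p * q ∣ n :=
        Nat.Coprime.mul_dvd_of_dvd_of_dvd ((Nat.coprime_primes hpp hqp).mpr hne)
          (Nat.dvd_of_mem_primeFactors hp) (Nat.dvd_of_mem_primeFactors hq)
      set m := n / (p * q) with hmdef
      have hm : (p * q) * m = n := Nat.mul_div_cancel' hpq
      have hm0 : 0 < m := by
        rcases Nat.eq_zero_or_pos m with h | h
        · rw [h, mul_zero] at hm; omega
        · exact h
      haveI : NeZero p := ⟨hpp.pos.ne'⟩
      haveI : NeZero q := ⟨hqp.pos.ne'⟩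
      haveI : NeZero m := ⟨hm0.ne'⟩
      haveI : Fact p.Prime := ⟨hpp⟩
      haveI : Fact q.Prime := ⟨hqp⟩
      haveI : Fact (1 < p) := ⟨hpp.one_lt⟩
      have hcardu : Fintype.card (ZMod q)ˣ = q - 1 := by
        rw [ZMod.card_units_eq_totient, Nat.totient_prime hqp]
      obtain ⟨u, hu⟩ := exists_prime_orderOf_dvd_card (G := (ZMod q)ˣ) p
        (by rw [hcardu]; exact hdvd)
      have hup : u ^ p = 1 := by rw [← hu]; exact pow_orderOf_eq_one u
      have hgp : ((u : ZMod q)) ^ p = 1 := by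
        rw [← Units.val_pow_eq_pow_val, hup, Units.val_one]
      have hg1 : (u : ZMod q) ≠ 1 := by
        intro h
        have : u = 1 := Units.ext h
        rw [this, orderOf_one] at hu
        exact hpp.one_lt.ne' hu.symm
      letI iA : SkewBrace ((ZMod q × ZMod p) × ZMod m) :=
        prodSB (sb2 p q (u : ZMod q) hgp) (trivialSB (ZMod m))
      have hcard : Fintype.card ((ZMod q × ZMod p) × ZMod m) = n := by
        rw [Fintype.card_prod, Fintype.card_prod, ZMod.card, ZMod.card, ZMod.card, ← hm]
        ring
      have hwt : derivedIdeal ((ZMod q × ZMod p) × ZMod m) ⊓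
          oppositeDerivedIdeal ((ZMod q × ZMod p) × ZMod m) = ⊥ :=
        hLHS ((ZMod q × ZMod p) × ZMod m) hcard
      set x : (ZMod q × ZMod p) × ZMod m := ((0, 1), 0) with hxdef
      set y : (ZMod q × ZMod p) × ZMod m := ((1, 0), 0) with hydef
      set e : (ZMod q × ZMod p) × ZMod m := (((u : ZMod q) - 1, 0), 0) with hedef
      have he0 : e ≠ 0 := by
        intro h
        have h1 := congrArg Prod.fst (congrArg Prod.fst h)
        exact (sub_ne_zero_of_ne hg1) h1
      have hmem1 : e ∈ derivedIdeal ((ZMod q × ZMod p) × ZMod m) := by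
        apply @AddSubgroup.subset_closure _ iA.toAddGroup
        refine ⟨x, y, Prod.ext (Prod.ext ?_ ?_) ?_⟩
        · show (u : ZMod q) - 1 =
            -0 + ((0 : ZMod q) + (u : ZMod q) ^ (1 : ZMod p).val * 1) - 1
          rw [ZMod.val_one, pow_one]
          ring
        · show (0 : ZMod p) = -1 + (1 + 0) - 0
          ring
        · show (0 : ZMod m) = -0 + (0 + 0) - 0
          ring
      have hmem2 : e ∈ oppositeDerivedIdeal ((ZMod q × ZMod p) × ZMod m) := by
        apply @AddSubgroup.subset_closure _ iA.toAddGroup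
        refine ⟨x, y, Prod.ext (Prod.ext ?_ ?_) ?_⟩
        · show (u : ZMod q) - 1 =
            -1 + ((0 : ZMod q) + (u : ZMod q) ^ (1 : ZMod p).val * 1) - 0
          rw [ZMod.val_one, pow_one]
          ring
        · show (0 : ZMod p) = -0 + (1 + 0) - 1
          ring
        · show (0 : ZMod m) = -0 + (0 + 0) - 0
          ring
      have hmem : e ∈ derivedIdeal ((ZMod q × ZMod p) × ZMod m) ⊓
          oppositeDerivedIdeal ((ZMod q × ZMod p) × ZMod m) := ⟨hmem1, hmem2⟩
      rw [hwt] at hmem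
      exact he0 ((@AddSubgroup.mem_bot _ iA.toAddGroup e).mp hmem)
  · rintro ⟨h1, h2⟩ A _ _ hcard
    have hsf : Squarefree n := by
      rw [Nat.squarefree_iff_factorization_le_one hn.ne']
      intro p
      by_cases hp : p ∈ n.primeFactors
      · rw [h1 p hp]
      · have : n.factorization p = 0 := by
          rw [← Nat.support_factorization] at hp
          exact Finsupp.notMem_support_iff.mp hp
        rw [this]
        omega
    have hco := coprime_totient_of_cond hn hsf h2
    have hcyc : IsCyclic (Multiplicative A) := by
      refine cyclic_aux hn hsf hco n dvd_rfl (Multiplicative A) inferInstance inferInstance ?_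
      have hc : Nat.card (Multiplicative A) = Nat.card A := Nat.card_congr Multiplicative.toAdd
      rw [hc, Nat.card_eq_fintype_card, hcard]
    apply weaklyTrivial_of_cond A hcyc
    rw [hcard]
    exact hco
end

section
/- Let n be a natural number with prime factorisation n = p_1^{α_1} ⋯ p_t^{α_t} (the p_i distinct primes). Then every skew brace of order n is one-generator if and only if α_i = 1 for every i and p_i does not divide p_j − 1 for all i ≠ j. -/
/-- A sub-skew brace: a subset that is a subgroup of both `(A,+)` and `(A,∘)`. -/
def IsSubSkewBrace {A : Type*} [SkewBrace A] (S : Set A) : Prop :=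
  (0 : A) ∈ S ∧ (∀ x ∈ S, ∀ y ∈ S, x + y ∈ S) ∧ (∀ x ∈ S, -x ∈ S) ∧
    (1 : A) ∈ S ∧ (∀ x ∈ S, ∀ y ∈ S, x * y ∈ S) ∧ (∀ x ∈ S, x⁻¹ ∈ S)

/-- A skew brace is one-generator if there is an element `a` such that the
smallest sub-skew brace containing `a` is the whole of `A`, i.e. every
sub-skew brace containing `a` is all of `A`. -/
def IsOneGenerator (A : Type*) [SkewBrace A] : Prop :=
  ∃ a : A, ∀ S : Set A, IsSubSkewBrace S → a ∈ S → S = Set.univ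

def Cond (n : ℕ) : Prop :=
  Squarefree n ∧ ∀ p ∈ n.primeFactors, ∀ q ∈ n.primeFactors, p ≠ q → ¬ p ∣ q - 1

lemma sqf_totient_dvd (m : ℕ) (hm : m ≠ 0) (hsq : Squarefree m) {p : ℕ} (hp : p.Prime)
    (h : p ∣ m.totient) : ∃ q ∈ m.primeFactors, p ∣ q - 1 := by
  rw [Nat.totient_eq_prod_factorization hm] at h
  rw [Finsupp.prod] at h
  obtain ⟨q, hq, hd⟩ := hp.prime.exists_mem_finset_dvd h
  rw [Nat.support_factorization] at hq
  refine ⟨q, hq, ?_⟩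
  have h1 : m.factorization q = 1 := by
    have h2 := (Nat.squarefree_iff_factorization_le_one hm).mp hsq q
    have h3 : q ∈ m.factorization.support := by rwa [Nat.support_factorization]
    have h4 := Finsupp.mem_support_iff.mp h3
    omega
  rwa [h1, pow_zero, one_mul] at hd

lemma cond_not_dvd_totient {n : ℕ} (hn : n ≠ 0) (hC : Cond n) {m : ℕ} (hm : m ∣ n)
    {p : ℕ} (hp : p.Prime) (hpn : p ∣ n) : ¬ p ∣ m.totient := by
  intro h
  have hm0 : m ≠ 0 := fun h0 => hn (by simpa [h0] using hm)
  obtain ⟨q, hq, hd⟩ := sqf_totient_dvd m hm0 (hC.1.squarefree_of_dvd hm) hp h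
  have hqn : q ∈ n.primeFactors := Nat.primeFactors_mono hm hn hq
  have hqp : q.Prime := Nat.prime_of_mem_primeFactors hq
  have hne : p ≠ q := by
    rintro rfl
    have h1 := hqp.two_le
    have := Nat.le_of_dvd (by omega) hd
    omega
  exact hC.2 p (Nat.mem_primeFactors.mpr ⟨hp, hpn, hn⟩) q hqn hne hd

lemma cond_dvd {n : ℕ} (hn : n ≠ 0) (hC : Cond n) {m : ℕ} (hm : m ∣ n) : Cond m := by
  refine ⟨hC.1.squarefree_of_dvd hm, fun p hp q hq hne => ?_⟩
  exact hC.2 p (Nat.primeFactors_mono hm hn hp) q (Nat.primeFactors_mono hm hn hq) hne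

lemma cyclic_of_cond : ∀ n : ℕ, Cond n → ∀ (G : Type) [Group G] [Finite G],
    Nat.card G = n → IsCyclic G := by
  intro n
  induction n using Nat.strong_induction_on with
  | _ n ih =>
    intro hC G _ _ hcard
    rcases eq_or_ne n 1 with rfl | hn1
    · have : Nat.card G = 1 := hcard
      have : Subsingleton G := (Nat.card_eq_one_iff_unique.mp this).1
      exact isCyclic_of_subsingleton
    have hn0 : n ≠ 0 := by
      have : Nat.card G ≠ 0 := Nat.card_pos.ne'
      omega
    set p := n.minFac with hpdef
    have hp : p.Prime := Nat.minFac_prime hn1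
    haveI : Fact p.Prime := ⟨hp⟩
    have hpn : p ∣ n := n.minFac_dvd
    obtain ⟨P⟩ : Nonempty (Sylow p G) := inferInstance
    have hfact : (Nat.card G).factorization p = 1 := by
      rw [hcard]
      have h2 := (Nat.squarefree_iff_factorization_le_one hn0).mp hC.1 p
      have h3 : 1 ≤ n.factorization p :=
        (Nat.Prime.factorization_pos_of_dvd hp hn0 hpn)
      omega
    have hcardP : Nat.card P = p := by
      rw [Sylow.card_eq_multiplicity, hfact, pow_one]
    haveI : IsCyclic P := isCyclic_of_prime_card hcardP
    -- normalizer ≤ centralizer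
    have hNC : Subgroup.normalizer ((P : Subgroup G) : Set G) ≤ Subgroup.centralizer (P : Set G) := by
      intro x hx
      set f := Subgroup.normalizerMonoidHom (P : Subgroup G) with hf
      set y : Subgroup.normalizer ((P : Subgroup G) : Set G) := ⟨x, hx⟩ with hy
      have h1 : orderOf (f y) ∣ Nat.card (MulAut (P : Subgroup G)) := orderOf_dvd_natCard _
      rw [IsCyclic.card_mulAut, hcardP] at h1
      have h2 : orderOf (f y) ∣ n := by
        calc orderOf (f y) ∣ orderOf y := orderOf_map_dvd f y
        _ ∣ Nat.card (Subgroup.normalizer ((P : Subgroup G) : Set G)) := orderOf_dvd_natCard y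
        _ ∣ n := hcard ▸ Subgroup.card_subgroup_dvd_card _
      have h3 : orderOf (f y) = 1 := by
        by_contra h
        obtain ⟨r, hr, hrd⟩ := Nat.exists_prime_and_dvd h
        exact cond_not_dvd_totient hn0 hC hpn hr (hrd.trans h2) (hrd.trans h1)
      have h4 : f y = 1 := orderOf_eq_one_iff.mp h3
      have h5 : y ∈ f.ker := h4
      rw [hf, Subgroup.normalizerMonoidHom_ker] at h5
      exact h5
    set K := (MonoidHom.transferSylow P hNC).ker with hK
    have hcomp : Subgroup.IsComplement' K (P : Subgroup G) :=
      MonoidHom.ker_transferSylow_isComplement' P hNC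
    have hmul : Nat.card K * Nat.card (P : Subgroup G) = n := by
      rw [← hcard]; exact hcomp.card_mul
    set m := Nat.card K with hm
    have hmn : m ∣ n := hcard ▸ Subgroup.card_subgroup_dvd_card _
    have hn_eq : m * p = n := by rw [hm, ← hmul, hcardP]
    have hmlt : m < n := by
      have hp2 := hp.two_le
      have hm1 : 1 ≤ m := Nat.card_pos
      nlinarith
    haveI hKcyc : IsCyclic K := ih m hmlt (cond_dvd hn0 hC hmn) K rfl
    -- p does not divide m
    have hpm : ¬ p ∣ m := by
      intro h
      obtain ⟨c, hc⟩ := h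
      have : p * p ∣ n := ⟨c, by rw [← hn_eq, hc]; ring⟩
      exact hp.not_isUnit (hC.1 p this)
    -- every element of P commutes with every element of K
    have hcomm : ∀ g ∈ (P : Subgroup G), ∀ k ∈ K, g * k = k * g := by
      intro g hg k hk
      set c := MulAut.conjNormal (H := K) with hcdef
      have h1 : orderOf (c g) ∣ p := by
        have := orderOf_map_dvd c g
        refine this.trans ?_
        have h2 : orderOf (⟨g, hg⟩ : (P : Subgroup G)) ∣ p :=
          (orderOf_dvd_natCard _).trans (dvd_of_eq hcardP)
        have h2' : orderOf ((⟨g, hg⟩ : (P : Subgroup G)) : G) ∣ p := by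
          rw [Subgroup.orderOf_coe]; exact h2
        exact h2'
      have h2 : orderOf (c g) ∣ Nat.card (MulAut K) := orderOf_dvd_natCard _
      rw [IsCyclic.card_mulAut] at h2
      have h3 : orderOf (c g) = 1 := by
        rcases (Nat.dvd_prime hp).mp h1 with h | h
        · exact h
        · exact absurd (h ▸ h2) (cond_not_dvd_totient hn0 hC hmn hp hpn)
      have h4 : c g = 1 := orderOf_eq_one_iff.mp h3
      have h5 : c g ⟨k, hk⟩ = ⟨k, hk⟩ := by rw [h4]; rfl
      have h6 : g * k * g⁻¹ = k := by
        have := congrArg Subtype.val h5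
        simpa [hcdef, MulAut.conjNormal_apply] using this
      calc g * k = g * k * g⁻¹ * g := by group
      _ = k * g := by rw [h6]
    -- build an element of order n
    obtain ⟨k, hk⟩ := hKcyc.exists_ofOrder_eq_natCard
    obtain ⟨g, hg⟩ := (inferInstance : IsCyclic (P : Subgroup G)).exists_ofOrder_eq_natCard
    have hkG : orderOf (k : G) = m := by rw [Subgroup.orderOf_coe, hk]
    have hgG : orderOf (g : G) = p := by rw [Subgroup.orderOf_coe, hg, hcardP]
    have hco : Nat.Coprime (orderOf (k : G)) (orderOf (g : G)) := by
      rw [hkG, hgG]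
      exact (hp.coprime_iff_not_dvd.mpr hpm).symm
    have hcomm2 : Commute (k : G) (g : G) := (hcomm g g.2 k k.2).symm
    have horder : orderOf ((k : G) * (g : G)) = n := by
      rw [hcomm2.orderOf_mul_eq_mul_orderOf_of_coprime hco, hkG, hgG, hn_eq]
    exact isCyclic_of_orderOf_eq_card _ (by rw [horder, hcard])


-- backward glue
lemma oneGenerator_of_addCyclic (A : Type) [SkewBrace A]
    (h : IsCyclic (Multiplicative A)) : IsOneGenerator A := by
  obtain ⟨g, hgen⟩ := h.exists_generator
  refine ⟨Multiplicative.toAdd g, fun S hS ha => ?_⟩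
  set S' : AddSubgroup A :=
    { carrier := S
      add_mem' := fun hx hy => hS.2.1 _ hx _ hy
      zero_mem' := hS.1
      neg_mem' := fun hx => hS.2.2.1 _ hx } with hS'
  rw [Set.eq_univ_iff_forall]
  intro x
  obtain ⟨k, hk⟩ := hgen (Multiplicative.ofAdd x)
  have hx : x = k • Multiplicative.toAdd g := by
    have := congrArg Multiplicative.toAdd hk
    simpa [toAdd_zpow] using this.symm
  have : k • Multiplicative.toAdd g ∈ S' := zsmul_mem ha k
  rwa [← hx] at this

-- the trivial skew brace on a group
def Triv (G : Type) := G

instance [Group G] : Group (Triv G) := inferInstanceAs (Group G)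
instance [Fintype G] : Fintype (Triv G) := inferInstanceAs (Fintype G)

instance (priority := 100) TrivAdd [Group G] : Add (Triv G) := ⟨fun a b => (a * b : G)⟩
instance (priority := 100) TrivZero [Group G] : Zero (Triv G) := ⟨(1 : G)⟩
instance (priority := 100) TrivNeg [Group G] : Neg (Triv G) := ⟨fun a => (a⁻¹ : G)⟩

instance TrivAddGroup [Group G] : AddGroup (Triv G) :=
  AddGroup.ofLeftAxioms (fun a b c => (mul_assoc (G := G) a b c))
    (fun a => (one_mul (a : G))) (fun a => (inv_mul_cancel (G := G) a))

instance [Group G] : SkewBrace (Triv G) :=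
  { TrivAddGroup, instGroupTriv with
    skew_left_distrib := fun a b c => by
      show (a * (b * c) : G) = a * b * a⁻¹ * (a * c)
      group }

lemma not_oneGenerator_Triv (G : Type) [Group G] [Finite G] (h : ¬ IsCyclic G) :
    ¬ IsOneGenerator (Triv G) := by
  rintro ⟨a, ha⟩
  have hsub : IsSubSkewBrace (A := Triv G) ((Subgroup.zpowers (a : G) : Subgroup G) : Set G) := by
    refine ⟨?_, ?_, ?_, ?_, ?_, ?_⟩
    · exact Subgroup.one_mem _
    · exact fun x hx y hy => Subgroup.mul_mem _ hx hy
    · exact fun x hx => Subgroup.inv_mem _ hx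
    · exact Subgroup.one_mem _
    · exact fun x hx y hy => Subgroup.mul_mem _ hx hy
    · exact fun x hx => Subgroup.inv_mem _ hx
  have huniv := ha _ hsub (Subgroup.mem_zpowers a)
  exact h ⟨a, fun x => Set.eq_univ_iff_forall.mp huniv x⟩

lemma noncyclic_case1 (p m : ℕ) [Fact p.Prime] [NeZero m] (hpm : p ∣ m) :
    ¬ IsCyclic (Multiplicative (ZMod p × ZMod m)) := by
  rintro ⟨g, hg⟩
  have horder : orderOf g = Nat.card (Multiplicative (ZMod p × ZMod m)) :=
    orderOf_eq_card_of_forall_mem_zpowers hg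
  have hpow : g ^ m = 1 := by
    have : m • (Multiplicative.toAdd g) = 0 := by
      ext
      · show m • (Multiplicative.toAdd g).1 = 0
        rw [nsmul_eq_mul, (ZMod.natCast_eq_zero_iff m p).mpr hpm, zero_mul]
      · show m • (Multiplicative.toAdd g).2 = 0
        rw [nsmul_eq_mul, ZMod.natCast_self, zero_mul]
    calc g ^ m = Multiplicative.ofAdd (m • Multiplicative.toAdd g) := rfl
    _ = 1 := by rw [this]; rfl
  have h1 : orderOf g ∣ m := orderOf_dvd_of_pow_eq_one hpow
  have h2 : Nat.card (Multiplicative (ZMod p × ZMod m)) = p * m := by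
    simp [Nat.card_eq_fintype_card, ZMod.card]
  have hp2 := (Fact.out : p.Prime).two_le
  have hm1 : 0 < m := Nat.pos_of_ne_zero (NeZero.ne m)
  have := Nat.le_of_dvd hm1 h1
  rw [horder, h2] at this
  nlinarith

open SemidirectProduct in
instance sdpFintype {N G : Type*} [Group N] [Group G] (φ : G →* MulAut N)
    [Fintype N] [Fintype G] : Fintype (N ⋊[φ] G) :=
  Fintype.ofEquiv (N × G)
    ⟨fun p => ⟨p.1, p.2⟩, fun s => (s.left, s.right), fun _ => rfl, fun _ => rfl⟩

open SemidirectProduct in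
lemma sdpCard {N G : Type*} [Group N] [Group G] (φ : G →* MulAut N)
    [Fintype N] [Fintype G] : Fintype.card (N ⋊[φ] G) = Fintype.card N * Fintype.card G := by
  rw [← Fintype.card_prod]
  exact Fintype.card_congr ⟨fun s => (s.left, s.right), fun p => ⟨p.1, p.2⟩,
    fun _ => rfl, fun _ => rfl⟩

/-- additive aut to mul aut of Multiplicative -/
def addAutToMulAut (α : Type*) [AddGroup α] : Multiplicative (AddAut α) →* MulAut (Multiplicative α) where
  toFun f := AddEquiv.toMultiplicative f.toAdd
  map_one' := by ext; rfl
  map_mul' f g := by ext; rfl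

section case2
variable (p q : ℕ) [Fact p.Prime] [Fact q.Prime] (hpq : p ∣ q - 1)
include hpq

lemma case2dvd : p ∣ Fintype.card (ZMod q)ˣ := by
  rwa [ZMod.card_units_eq_totient, Nat.totient_prime Fact.out]

noncomputable def case2u : (ZMod q)ˣ :=
  (exists_prime_orderOf_dvd_card p (case2dvd p q hpq)).choose

lemma case2u_order : orderOf (case2u p q hpq) = p :=
  (exists_prime_orderOf_dvd_card p (case2dvd p q hpq)).choose_spec

lemma case2u_pow : (case2u p q hpq) ^ (p : ℤ) = 1 := by
  have h := pow_orderOf_eq_one (case2u p q hpq)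
  rw [case2u_order p q hpq] at h
  rw [zpow_natCast]
  exact h

noncomputable def case2theta : Multiplicative (ZMod p) →* (ZMod q)ˣ :=
  AddMonoidHom.toMultiplicativeLeft
    (ZMod.lift p ⟨zmultiplesHom _ (Additive.ofMul (case2u p q hpq)), by
      show (p : ℤ) • Additive.ofMul (case2u p q hpq) = 0
      rw [← ofMul_zpow, case2u_pow p q hpq]; rfl⟩)

lemma case2theta_one : case2theta p q hpq (Multiplicative.ofAdd 1) = case2u p q hpq := by
  unfold case2theta
  rw [AddMonoidHom.coe_toMultiplicativeLeft]
  show Additive.toMul (ZMod.lift p _ (Multiplicative.toAdd (Multiplicative.ofAdd (1 : ZMod p)))) = _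
  rw [toAdd_ofAdd]
  rw [show (1 : ZMod p) = ((1 : ℤ) : ZMod p) by norm_cast]
  rw [ZMod.lift_coe]
  show Additive.toMul ((1:ℤ) • Additive.ofMul (case2u p q hpq)) = _
  rw [one_zsmul]
  rfl

noncomputable def case2phi : Multiplicative (ZMod p) →* MulAut (Multiplicative (ZMod q)) :=
  (addAutToMulAut (ZMod q)).comp
    ((AddMonoidHom.toMultiplicativeRight (ZMod.AddAutEquivUnits q).symm.toAddMonoidHom).comp (case2theta p q hpq))

lemma case2phi_apply :
    case2phi p q hpq (Multiplicative.ofAdd 1) (Multiplicative.ofAdd (1 : ZMod q)) =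
    Multiplicative.ofAdd ((case2u p q hpq : ZMod q)) := by
  show Multiplicative.ofAdd
      (((ZMod.AddAutEquivUnits q).symm (Additive.ofMul (case2theta p q hpq (Multiplicative.ofAdd 1))))
        (1 : ZMod q)) = _
  rw [case2theta_one]
  show Multiplicative.ofAdd ((case2u p q hpq : ZMod q) * 1) = _
  rw [mul_one]

noncomputable abbrev case2G : Type :=
  (Multiplicative (ZMod q)) ⋊[case2phi p q hpq] (Multiplicative (ZMod p))

lemma case2_noncomm : ¬ (∀ a b : case2G p q hpq, a * b = b * a) := by
  intro h
  have hc := congrArg SemidirectProduct.left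
    (h (SemidirectProduct.inl (Multiplicative.ofAdd (1 : ZMod q)))
       (SemidirectProduct.inr (Multiplicative.ofAdd (1 : ZMod p))))
  simp only [SemidirectProduct.mul_left, SemidirectProduct.left_inl,
    SemidirectProduct.right_inl, SemidirectProduct.left_inr, SemidirectProduct.right_inr,
    map_one, MulAut.one_apply, mul_one, one_mul] at hc
  rw [case2phi_apply] at hc
  have h1 : (1 : ZMod q) = (case2u p q hpq : ZMod q) := Multiplicative.ofAdd.injective hc
  have hu1 : case2u p q hpq = 1 := Units.val_eq_one.mp h1.symm
  have ho := case2u_order p q hpq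
  rw [hu1, orderOf_one] at ho
  exact (Fact.out : p.Prime).one_lt.ne ho
end case2

lemma comm_of_isCyclic {G : Type*} [Group G] (h : IsCyclic G) (a b : G) : a * b = b * a := by
  obtain ⟨g, hg⟩ := h.exists_generator
  obtain ⟨i, hi⟩ := hg a
  obtain ⟨j, hj⟩ := hg b
  subst hi hj
  show g ^ i * g ^ j = g ^ j * g ^ i
  exact ((Commute.refl g).zpow_zpow i j).eq

lemma noncyclic_case2 (p q m : ℕ) [Fact p.Prime] [Fact q.Prime] [NeZero m] (hpq : p ∣ q - 1) :
    ¬ IsCyclic (case2G p q hpq × Multiplicative (ZMod m)) := by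
  intro h
  apply case2_noncomm p q hpq
  intro a b
  exact congrArg Prod.fst (comm_of_isCyclic h (a, 1) (b, 1))

/-- Every skew brace of order `n` is one-generator if and only if `n` is
square-free and `p ∤ q - 1` for all distinct primes `p, q` dividing `n`. -/
theorem every_skewBrace_is_one_generator_iff (n : ℕ) (hn : 0 < n) :
    (∀ (A : Type) [Fintype A] [SkewBrace A], Fintype.card A = n →
      IsOneGenerator A) ↔
    ((∀ p ∈ n.primeFactors, n.factorization p = 1) ∧
      (∀ p ∈ n.primeFactors, ∀ q ∈ n.primeFactors, p ≠ q → ¬ p ∣ q - 1)) := by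
  have hn0 : n ≠ 0 := hn.ne'
  constructor
  · intro H
    constructor
    · -- squarefree part
      intro p hp
      by_contra hne
      have hpprime : p.Prime := Nat.prime_of_mem_primeFactors hp
      haveI : Fact p.Prime := ⟨hpprime⟩
      have h1 : 1 ≤ n.factorization p := (Nat.Prime.factorization_pos_of_dvd hpprime hn0
        (Nat.dvd_of_mem_primeFactors hp))
      have h2 : 2 ≤ n.factorization p := by omega
      have hp2 : p ^ 2 ∣ n := (pow_dvd_pow p h2).trans (Nat.ordProj_dvd n p)
      set m := n / p with hm
      have hpn : p ∣ n := Nat.dvd_of_mem_primeFactors hp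
      have hnm : p * m = n := Nat.mul_div_cancel' hpn
      have hpm : p ∣ m := by
        have : p * p ∣ p * m := by rw [hnm]; rwa [pow_two] at hp2
        exact (mul_dvd_mul_iff_left (by exact_mod_cast hpprime.pos.ne' : p ≠ 0)).mp this
      haveI : NeZero m := ⟨fun h0 => by rw [h0, mul_zero] at hnm; omega⟩
      have hcardG : Fintype.card (Triv (Multiplicative (ZMod p × ZMod m))) = n := by
        show Fintype.card (Multiplicative (ZMod p × ZMod m)) = n
        rw [Fintype.card_multiplicative, Fintype.card_prod, ZMod.card, ZMod.card]
        exact hnm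
      have := H (Triv (Multiplicative (ZMod p × ZMod m))) hcardG
      exact not_oneGenerator_Triv _ (noncyclic_case1 p m hpm) this
    · -- p ∤ q - 1 part
      intro p hp q hq hne hdvd
      have hpprime : p.Prime := Nat.prime_of_mem_primeFactors hp
      have hqprime : q.Prime := Nat.prime_of_mem_primeFactors hq
      haveI : Fact p.Prime := ⟨hpprime⟩
      haveI : Fact q.Prime := ⟨hqprime⟩
      have hpqn : p * q ∣ n :=
        Nat.Coprime.mul_dvd_of_dvd_of_dvd ((Nat.coprime_primes hpprime hqprime).mpr hne)
          (Nat.dvd_of_mem_primeFactors hp) (Nat.dvd_of_mem_primeFactors hq)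
      set m := n / (p * q) with hm
      have hnm : p * q * m = n := Nat.mul_div_cancel' hpqn
      haveI : NeZero m := ⟨fun h0 => by rw [h0, mul_zero] at hnm; omega⟩
      have hcardG : Fintype.card (Triv (case2G p q hdvd × Multiplicative (ZMod m))) = n := by
        show Fintype.card (case2G p q hdvd × Multiplicative (ZMod m)) = n
        rw [Fintype.card_prod, sdpCard, Fintype.card_multiplicative,
          Fintype.card_multiplicative, Fintype.card_multiplicative,
          ZMod.card, ZMod.card, ZMod.card, ← hnm]
        ring
      have := H (Triv (case2G p q hdvd × Multiplicative (ZMod m))) hcardG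
      exact not_oneGenerator_Triv _ (noncyclic_case2 p q m hdvd) this
  · rintro ⟨h1, h2⟩ A _ _ hcard
    have hC : Cond n := by
      constructor
      · rw [Nat.squarefree_iff_factorization_le_one hn0]
        intro p
        by_cases hp : p ∈ n.primeFactors
        · rw [h1 p hp]
        · have : n.factorization p = 0 := by
            apply Finsupp.notMem_support_iff.mp
            rwa [Nat.support_factorization]
          omega
      · exact h2
    have hcyc : IsCyclic (Multiplicative A) := by
      apply cyclic_of_cond n hC
      rw [← hcard, ← Nat.card_eq_fintype_card]
      exact Nat.card_congr Multiplicative.toAdd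
    exact oneGenerator_of_addCyclic A hcyc
end
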